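/- For all real x and all α ≥ 0, exp(x) ≥ 1 + x + c_α(x), where c_α(x) = (1/2)exp(-α)x² if |x| ≤ α and c_α(x) = (1/2)exp(-α)α|x| if |x| ≥ α. -/

import Mathlib

open Real

/-- The function `c_α` : quadratic near the origin, linear in the tails. -/
noncomputable def cFun (α x : ℝ) : ℝ :=
  if |x| ≤ α then (1/2) * Real.exp (-α) * x ^ 2 else (1/2) * Real.exp (-α) * α * |x|

private lemma key_phi (y : ℝ) (hy : 0 ≤ y) : y ^ 2 / 2 ≤ Real.exp y * (y - 1) + 1 := by
  have hd : ∀ z : ℝ, HasDerivAt (fun t => Real.exp t * (t - 1) + 1 - t ^ 2 / 2)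
      (z * (Real.exp z - 1)) z := by
    intro z
    have h1 := (((Real.hasDerivAt_exp z).fun_mul ((hasDerivAt_id z).sub_const 1)).add_const 1).fun_sub
      ((hasDerivAt_pow 2 z).div_const 2)
    simp only [id] at h1
    refine h1.congr_deriv ?_
    push_cast
    ring
  have hmono : MonotoneOn (fun t => Real.exp t * (t - 1) + 1 - t ^ 2 / 2) (Set.Ici 0) := by
    apply monotoneOn_of_hasDerivWithinAt_nonneg (convex_Ici 0)
      (fun z _ => (hd z).continuousAt.continuousWithinAt)
      (fun z _ => (hd z).hasDerivWithinAt)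
    intro z hz
    rw [interior_Ici] at hz
    exact mul_nonneg hz.le (by nlinarith [Real.one_le_exp hz.le])
  have h0 := hmono (Set.self_mem_Ici) (Set.mem_Ici.mpr hy) hy
  simp at h0
  linarith

private lemma key_quad (x : ℝ) (hx : 0 ≤ x) : 1 + x + x ^ 2 / 2 ≤ Real.exp x := by
  have hd : ∀ z : ℝ, HasDerivAt (fun t => Real.exp t - 1 - t - t ^ 2 / 2)
      (Real.exp z - 1 - z) z := by
    intro z
    have h1 := (((Real.hasDerivAt_exp z).sub_const 1).fun_sub (hasDerivAt_id z)).fun_sub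
      ((hasDerivAt_pow 2 z).div_const 2)
    simp only [id] at h1
    refine h1.congr_deriv ?_
    push_cast
    ring
  have hmono : MonotoneOn (fun t => Real.exp t - 1 - t - t ^ 2 / 2) (Set.Ici 0) := by
    apply monotoneOn_of_hasDerivWithinAt_nonneg (convex_Ici 0)
      (fun z _ => (hd z).continuousAt.continuousWithinAt)
      (fun z _ => (hd z).hasDerivWithinAt)
    intro z hz
    have := Real.add_one_le_exp z
    linarith
  have h0 := hmono (Set.self_mem_Ici) (Set.mem_Ici.mpr hx) hx
  simp at h0
  linarith

/-- For nonpositive `x`, `exp x - 1 - x ≥ (x²/2) * exp x`. -/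
private lemma key_neg (x : ℝ) (hx : x ≤ 0) : x ^ 2 / 2 * Real.exp x ≤ Real.exp x - 1 - x := by
  have h := key_phi (-x) (by linarith)
  have hmul := mul_le_mul_of_nonneg_right h (Real.exp_pos x).le
  have he : Real.exp (-x) * Real.exp x = 1 := by
    rw [← Real.exp_add]; simp
  nlinarith [Real.exp_pos x]

/-- For all real `x` and all `α ≥ 0`, `exp x ≥ 1 + x + c_α(x)`. -/
theorem exp_ge_one_add_add_cFun (α : ℝ) (hα : 0 ≤ α) (x : ℝ) :
    Real.exp x ≥ 1 + x + cFun α x := by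
  have hea : Real.exp (-α) ≤ 1 := by
    calc Real.exp (-α) ≤ Real.exp 0 := Real.exp_le_exp.mpr (by linarith)
    _ = 1 := Real.exp_zero
  have heapos := Real.exp_pos (-α)
  unfold cFun
  by_cases h : |x| ≤ α
  · rw [if_pos h]
    rcases le_or_gt 0 x with hx | hx
    · have := key_quad x hx
      nlinarith [sq_nonneg x]
    · have hax : -α ≤ x := (abs_le.mp h).1
      have h1 := key_neg x hx.le
      have h2 : Real.exp (-α) ≤ Real.exp x := Real.exp_le_exp.mpr hax
      nlinarith [sq_nonneg x]
  · rw [if_neg h]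
    push_neg at h
    rcases le_or_gt 0 x with hx | hx
    · rw [abs_of_nonneg hx] at h ⊢
      have := key_quad x hx
      nlinarith [mul_nonneg hα hx]
    · rw [abs_of_neg hx] at h ⊢
      -- x < -α; goal: exp x ≥ 1 + x + (1/2) * exp (-α) * α * (-x)
      have hxα : x ≤ -α := by linarith
      set c : ℝ := (1/2) * Real.exp (-α) * α with hc
      have hd : ∀ z : ℝ, HasDerivAt (fun t => Real.exp t - 1 - t + c * t)
          (Real.exp z - 1 + c) z := by
        intro z
        have h1 := ((((Real.hasDerivAt_exp z).sub_const 1).sub (hasDerivAt_id z)).add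
          ((hasDerivAt_id z).const_mul c))
        simp only [id, mul_one] at h1
        exact h1
      have hanti : AntitoneOn (fun t => Real.exp t - 1 - t + c * t) (Set.Iic (-α)) := by
        apply antitoneOn_of_hasDerivWithinAt_nonpos (convex_Iic (-α))
          (fun z _ => (hd z).continuousAt.continuousWithinAt)
          (fun z _ => (hd z).hasDerivWithinAt)
        intro z hz
        rw [interior_Iic] at hz
        have h1 : Real.exp z ≤ Real.exp (-α) := Real.exp_le_exp.mpr hz.le
        have h2 : 1 + α ≤ Real.exp α := by linarith [Real.add_one_le_exp α]
        have he : Real.exp (-α) * Real.exp α = 1 := by rw [← Real.exp_add]; simp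
        -- need exp z - 1 + (1/2) exp(-α) α ≤ 0
        nlinarith [Real.exp_pos α]
      have hAB := hanti (Set.mem_Iic.mpr hxα) (Set.self_mem_Iic) hxα
      have hend : (0:ℝ) ≤ Real.exp (-α) - 1 - (-α) + c * (-α) := by
        have := key_neg (-α) (by linarith)
        nlinarith
      simp only at hAB
      nlinarith
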